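/- Let X ∈ ℝ^{n×p}, Y ∈ ℝ^n, λ > 0, and let β̂^{SQL} be any minimizer over β ∈ ℝ^p of (1/√n)|Y − Xβ|₂ + λ|β|₁. Let β* ∈ ℝ^p and S ⊆ {1,…,p} be such that β*_i = 0 for all i ∉ S, and assume ε := Y − Xβ* ≠ 0. Then |(β̂^{SQL} − β*)_{S^C}|₁ ≤ |(β̂^{SQL} − β*)_S|₁ + (1/(λ·√n·|ε|₂))·⟨Xᵀε, β̂^{SQL} − β*⟩. -/
import Mathlib


noncomputable section

/-- The `l2` (Euclidean) norm of a vector. -/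
def l2norm {m : ℕ} (u : Fin m → ℝ) : ℝ := Real.sqrt (∑ i, (u i) ^ 2)

/-- The `l1` norm of a vector. -/
def l1norm {m : ℕ} (u : Fin m → ℝ) : ℝ := ∑ i, |u i|

lemma l2norm_nonneg {m : ℕ} (u : Fin m → ℝ) : 0 ≤ l2norm u := Real.sqrt_nonneg _

lemma l2norm_pos {m : ℕ} {u : Fin m → ℝ} (hu : u ≠ 0) : 0 < l2norm u := by
  apply Real.sqrt_pos.2
  obtain ⟨i, hi⟩ : ∃ i, u i ≠ 0 := by
    by_contra h; push_neg at h; exact hu (funext h)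
  exact Finset.sum_pos' (fun j _ => sq_nonneg _)
    ⟨i, Finset.mem_univ i, by positivity⟩

lemma inner_le_l2 {m : ℕ} (u v : Fin m → ℝ) :
    ∑ i, u i * v i ≤ l2norm u * l2norm v :=
  Real.sum_mul_le_sqrt_mul_sqrt _ u v

lemma l2norm_sq {m : ℕ} (u : Fin m → ℝ) : l2norm u ^ 2 = ∑ i, (u i) ^ 2 :=
  Real.sq_sqrt (Finset.sum_nonneg fun _ _ => sq_nonneg _)

/-- Lemma 4 (cone-type inequality for the Square-Root Lasso, deterministic). -/
theorem sqrt_lasso_cone_inequality (n p : ℕ)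
    (X : Matrix (Fin n) (Fin p) ℝ) (Y : Fin n → ℝ) (lam : ℝ) (hlam : 0 < lam)
    (βh : Fin p → ℝ)
    (hmin : ∀ β : Fin p → ℝ,
      (1 / Real.sqrt n) * l2norm (Y - X.mulVec βh) + lam * l1norm βh
      ≤ (1 / Real.sqrt n) * l2norm (Y - X.mulVec β) + lam * l1norm β)
    (βs : Fin p → ℝ) (S : Finset (Fin p)) (hS : ∀ i ∉ S, βs i = 0)
    (hne : Y - X.mulVec βs ≠ 0) :
    l1norm (fun i => if i ∈ S then 0 else βh i - βs i) ≤
      l1norm (fun i => if i ∈ S then βh i - βs i else 0)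
      + (1 / (lam * Real.sqrt n * l2norm (Y - X.mulVec βs))) *
          ∑ j, X.transpose.mulVec (Y - X.mulVec βs) j * (βh j - βs j) := by
  classical
  set ε : Fin n → ℝ := Y - X.mulVec βs with hεdef
  set w : Fin n → ℝ := Y - X.mulVec βh with hwdef
  set h : Fin p → ℝ := fun i => βh i - βs i with hhdef
  have hεpos : 0 < l2norm ε := l2norm_pos hne
  have hn : 0 < (n : ℝ) := by
    rcases Nat.eq_zero_or_pos n with h0 | hpos
    · exact absurd (by subst h0; exact funext fun i => i.elim0) hne
    · exact_mod_cast hpos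
  have hsn : 0 < Real.sqrt n := Real.sqrt_pos.2 hn
  set ip : ℝ := ∑ j, X.transpose.mulVec ε j * (βh j - βs j) with hipdef
  -- rewrite ip as inner product of ε with X *ᵥ h
  have hip : ip = ∑ i, ε i * X.mulVec h i := by
    rw [hipdef]
    simp only [Matrix.mulVec, dotProduct, Matrix.transpose_apply,
      Finset.sum_mul, Finset.mul_sum]
    rw [Finset.sum_comm]
    exact Finset.sum_congr rfl fun i _ => Finset.sum_congr rfl fun j _ => by ring
  -- w = ε - X *ᵥ h
  have hXh : X.mulVec h = X.mulVec βh - X.mulVec βs := by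
    rw [show h = βh - βs from rfl, Matrix.mulVec_sub]
  have hw : ∀ i, w i = ε i - X.mulVec h i := by
    intro i
    simp only [hwdef, hεdef, hXh, Pi.sub_apply]
    ring
  -- key norm inequality: ‖ε‖ - ‖w‖ ≤ ip / ‖ε‖
  have key1 : l2norm ε - l2norm w ≤ ip / l2norm ε := by
    have hCS : ∑ i, ε i * w i ≤ l2norm ε * l2norm w := inner_le_l2 ε w
    have hsum : ∑ i, ε i * w i = l2norm ε ^ 2 - ip := by
      rw [hip, l2norm_sq, ← Finset.sum_sub_distrib]
      exact Finset.sum_congr rfl fun i _ => by rw [hw i]; ring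
    rw [hsum] at hCS
    rw [le_div_iff₀ hεpos]
    nlinarith [hCS]
  -- l1 inequality
  set A : ℝ := l1norm (fun i => if i ∈ S then 0 else βh i - βs i) with hA
  set B : ℝ := l1norm (fun i => if i ∈ S then βh i - βs i else 0) with hB
  have hl1 : l1norm βs + A ≤ l1norm βh + B := by
    rw [hA, hB]
    simp only [l1norm, ← Finset.sum_add_distrib]
    apply Finset.sum_le_sum
    intro i _
    by_cases hi : i ∈ S
    · simp only [hi, if_pos, abs_zero]
      have := abs_sub_abs_le_abs_sub (βs i) (βh i)
      rw [abs_sub_comm] at this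
      linarith
    · simp only [hi, if_neg, abs_zero, hS i hi]
      simp
  -- optimality at βs
  have hopt := hmin βs
  -- combine: lam * (A - B) ≤ (1/√n) * (ip / ‖ε‖)
  have hcomb : lam * (A - B) ≤ (1 / Real.sqrt n) * (ip / l2norm ε) := by
    have h1 : lam * (A - B) ≤ lam * (l1norm βh - l1norm βs) := by
      apply mul_le_mul_of_nonneg_left _ hlam.le
      linarith
    have h2 : lam * (l1norm βh - l1norm βs)
        ≤ (1 / Real.sqrt n) * (l2norm ε - l2norm w) := by
      nlinarith [hopt, hsn]
    have h3 : (1 / Real.sqrt n) * (l2norm ε - l2norm w)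
        ≤ (1 / Real.sqrt n) * (ip / l2norm ε) := by
      apply mul_le_mul_of_nonneg_left key1
      positivity
    linarith
  -- divide by lam
  have hpos : 0 < lam * Real.sqrt n * l2norm ε := by positivity
  have hfin : A - B ≤ (1 / (lam * Real.sqrt n * l2norm ε)) * ip := by
    rw [one_div_mul_eq_div, le_div_iff₀ hpos]
    have e1 : (1 / Real.sqrt n) * (ip / l2norm ε) * (Real.sqrt n * l2norm ε) = ip := by
      field_simp
    have e2 := mul_le_mul_of_nonneg_right hcomb
      (by positivity : (0:ℝ) ≤ Real.sqrt n * l2norm ε)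
    rw [e1] at e2
    nlinarith [e2]
  linarith

end
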